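/- arXiv:2210.04583 — 3 statements merged into one kernel-verified Lean document; each statement's English description precedes it below -/
import Mathlib

section
/- Every twisted conjugation quandle embeds into the conjugation quandle of some group; i.e., for any group G and automorphism φ, there exists a group H and an injective quandle homomorphism Conj(G, φ) → Conj(H). -/
/-- Every twisted conjugation quandle `Conj(G, φ)` embeds into the conjugation
quandle of some group. -/
theorem twisted_conj_embeddable {G : Type u} [Group G] (φ : G ≃* G) :
    ∃ (H : Type u) (_ : Group H) (f : G → H), Function.Injective f ∧
      ∀ g h : G, f (φ (h⁻¹ * g) * h) = (f h)⁻¹ * f g * f h := by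
  refine ⟨SemidirectProduct G (Multiplicative ℤ) (zpowersHom (MulAut G) φ⁻¹), inferInstance,
    fun g => SemidirectProduct.inl g * SemidirectProduct.inr (Multiplicative.ofAdd 1), ?_, ?_⟩
  · intro a b hab
    have := congrArg SemidirectProduct.left hab
    simpa using this
  · intro g h
    ext <;> simp [mul_assoc]
end

section
/- Every Alexander quandle embeds into the conjugation quandle of some group: for any abelian group A and automorphism φ, there exists a group H and an injective map f : A → H with f(φ(a) + b − φ(b)) = f(b)⁻¹ f(a) f(b) for all a, b in A. -/
universe u

def alexPsi {A : Type u} [AddCommGroup A] (φ : A ≃+ A) :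
    Multiplicative (ULift.{u} ℤ) →* MulAut (Multiplicative A) :=
  (zpowersHom _ (AddEquiv.toMultiplicative φ)).comp
    (AddEquiv.toMultiplicative (AddEquiv.ulift)).toMonoidHom

/-- Every Alexander quandle `Alex(A, φ)` embeds into the conjugation quandle of
some group. -/
theorem alexander_embeddable {A : Type u} [AddCommGroup A] (φ : A ≃+ A) :
    ∃ (H : Type u) (_ : Group H) (f : A → H), Function.Injective f ∧
      ∀ a b : A, f (φ a + b - φ b) = (f b)⁻¹ * f a * f b := by
  classical
  set ψ := alexPsi φ
  refine ⟨Multiplicative A ⋊[ψ] Multiplicative (ULift.{u} ℤ), inferInstance,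
    fun a => ⟨Multiplicative.ofAdd a, Multiplicative.ofAdd (ULift.up (-1))⟩, ?_, ?_⟩
  · intro a b h
    have := congrArg SemidirectProduct.left h
    simpa using this
  · intro a b
    ext
    · simp [-SemidirectProduct.mk_eq_inl_mul_inr, SemidirectProduct.mul_left, SemidirectProduct.inv_left]
      simp [alexPsi, ψ]
      rw [show AddEquiv.ulift (ULift.up (-1 : ℤ)) = (-1 : ℤ) from rfl]
      simp [zpow_neg, AddEquiv.toMultiplicative]
      abel
    · simp
end

section
/- For an abelian group A and automorphism φ, the map a ↦ (a, 1) from the Alexander quandle Alex(A, φ) to Conj(A ⋊_φ ℤ) is an injective quandle homomorphism, where A ⋊_φ ℤ has multiplication (a,m)·(b,n) = (φⁿ(a)+b, m+n). -/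
/-- The automorphism group of `A` as a multiplicative group (as `AddAut A` was in the older
Mathlib; it is now an additive group). -/
instance addEquivSelfGroupOld {A : Type*} [Add A] : Group (A ≃+ A) where
  mul g h := h.trans g
  one := AddEquiv.refl _
  inv := AddEquiv.symm
  mul_assoc _ _ _ := rfl
  one_mul _ := rfl
  mul_one _ := rfl
  inv_mul_cancel := AddEquiv.self_trans_symm

/-- The semidirect product `A ⋊_φ ℤ` for an additive abelian group `A`, with
multiplication `(a, m) · (b, n) = (φⁿ(a) + b, m + n)`. -/
def twAddGroup {A : Type*} [AddCommGroup A] (φ : A ≃+ A) : Group (A × ℤ) where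
  mul a b := ((φ ^ b.2 : A ≃+ A) a.1 + b.1, a.2 + b.2)
  one := (0, 0)
  inv a := ((φ ^ (-a.2) : A ≃+ A) (-a.1), -a.2)
  div a b := ((φ ^ (-b.2) : A ≃+ A) a.1 + (φ ^ (-b.2) : A ≃+ A) (-b.1), a.2 + -b.2)
  div_eq_mul_inv _ _ := rfl
  mul_assoc a b c := by
    have key : ∀ (m n : ℤ) (x : A), (φ ^ (m + n) : A ≃+ A) x
        = (φ ^ m : A ≃+ A) ((φ ^ n : A ≃+ A) x) := by
      intro m n x; rw [zpow_add]; rfl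
    refine Prod.ext ?_ (add_assoc _ _ _)
    show (φ ^ c.2 : A ≃+ A) ((φ ^ b.2 : A ≃+ A) a.1 + b.1) + c.1
        = (φ ^ (b.2 + c.2) : A ≃+ A) a.1 + ((φ ^ c.2 : A ≃+ A) b.1 + c.1)
    rw [map_add, add_comm b.2 c.2, key, add_assoc]
  one_mul b := by
    refine Prod.ext ?_ (zero_add _)
    show (φ ^ b.2 : A ≃+ A) 0 + b.1 = b.1
    rw [map_zero, zero_add]
  mul_one a := by
    refine Prod.ext ?_ (add_zero _)
    show (φ ^ (0 : ℤ) : A ≃+ A) a.1 + 0 = a.1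
    rw [zpow_zero, add_zero]; rfl
  inv_mul_cancel a := by
    have key : ∀ x : A, (φ ^ a.2 : A ≃+ A) ((φ ^ (-a.2) : A ≃+ A) x) = x := by
      intro x
      have : (φ ^ a.2 : A ≃+ A) * (φ ^ (-a.2) : A ≃+ A) = 1 := by
        rw [← zpow_add, add_neg_cancel, zpow_zero]
      calc (φ ^ a.2 : A ≃+ A) ((φ ^ (-a.2) : A ≃+ A) x)
          = ((φ ^ a.2 : A ≃+ A) * (φ ^ (-a.2) : A ≃+ A)) x := rfl
        _ = x := by rw [this]; rfl
    refine Prod.ext ?_ (neg_add_cancel _)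
    show (φ ^ a.2 : A ≃+ A) ((φ ^ (-a.2) : A ≃+ A) (-a.1)) + a.1 = 0
    rw [key, neg_add_cancel]

/-- The map `a ↦ (a, 1)` is an injective quandle homomorphism from the
Alexander quandle `Alex(A, φ)` into the conjugation quandle of `A ⋊_φ ℤ`. -/
theorem alexander_embeds_in_twAddGroup {A : Type*} [AddCommGroup A]
    (φ : A ≃+ A) :
    letI := twAddGroup φ
    Function.Injective (fun a : A => ((a, 1) : A × ℤ)) ∧
    ∀ a b : A, ((φ a + b - φ b, 1) : A × ℤ)
        = ((b, 1) : A × ℤ)⁻¹ * (a, 1) * (b, 1) := by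
  constructor
  · intro a b h
    exact congrArg Prod.fst h
  · intro a b
    letI := twAddGroup φ
    refine Prod.ext ?_ rfl
    show φ a + b - φ b
        = (φ ^ (1:ℤ) : A ≃+ A) ((φ ^ (1:ℤ) : A ≃+ A) ((φ ^ (-(1:ℤ)) : A ≃+ A) (-b)) + a) + b
    have h1 : ∀ x : A, (φ ^ (1:ℤ) : A ≃+ A) x = φ x := by
      intro x; rw [zpow_one]
    have h2 : (φ ^ (1:ℤ) : A ≃+ A) ((φ ^ (-(1:ℤ)) : A ≃+ A) (-b)) = -b := by
      have : (φ ^ (1:ℤ) : A ≃+ A) * (φ ^ (-(1:ℤ)) : A ≃+ A) = 1 := by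
        rw [← zpow_add, add_neg_cancel, zpow_zero]
      calc (φ ^ (1:ℤ) : A ≃+ A) ((φ ^ (-(1:ℤ)) : A ≃+ A) (-b))
          = ((φ ^ (1:ℤ) : A ≃+ A) * (φ ^ (-(1:ℤ)) : A ≃+ A)) (-b) := rfl
        _ = -b := by rw [this]; rfl
    rw [h2, h1, map_add, map_neg]
    abel
end
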